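/- For any finite prechart X, a map s : X → SExp is a solution of the linear system associated to X (i.e. s(x) ≡ Σ_{x ⇒ a} a + Σ_{x →a x'} a·s(x') for all x ∈ X) if and only if the composite [−]_≡ ∘ s : X → SExp/≡ is a P-coalgebra homomorphism. -/

import Mathlib

universe u

/-- A prechart: a coalgebra for the functor `P(X) = 2^A × Pfin(X)^A`. -/
structure Prechart (A : Type) (X : Type u) where
  out : X → A → Prop
  tr : X → A → Set X
  fin : ∀ x a, (tr x a).Finite

namespace Prechart

variable {A : Type} {X Y : Type u}

/-- `h` is a `P`-coalgebra homomorphism from `c` to `d`. -/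
def IsHom (c : Prechart A X) (d : Prechart A Y) (h : X → Y) : Prop :=
  (∀ x a, c.out x a ↔ d.out (h x) a) ∧ ∀ x a, d.tr (h x) a = h '' c.tr x a

/-- `R` is a bisimulation between precharts `c` and `d`: it carries a prechart
structure making both projections coalgebra homomorphisms. -/
def IsBisim (c : Prechart A X) (d : Prechart A Y) (R : X → Y → Prop) : Prop :=
  ∃ e : Prechart A {p : X × Y // R p.1 p.2},
    IsHom e c (fun p => p.1.1) ∧ IsHom e d (fun p => p.1.2)

end Prechart

/-- 1-free star expressions over alphabet `A`. -/
inductive SExp (A : Type) : Type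
  | act : A → SExp A
  | zero : SExp A
  | add : SExp A → SExp A → SExp A
  | seq : SExp A → SExp A → SExp A
  | star : SExp A → SExp A → SExp A

/-- The output relation `e ⇒ a` of the operational semantics. -/
inductive SOut {A : Type} : SExp A → A → Prop
  | act (a : A) : SOut (.act a) a
  | addL {e₁ e₂ : SExp A} {a : A} : SOut e₁ a → SOut (.add e₁ e₂) a
  | addR {e₁ e₂ : SExp A} {a : A} : SOut e₂ a → SOut (.add e₁ e₂) a
  | star {e₁ e₂ : SExp A} {a : A} : SOut e₂ a → SOut (.star e₁ e₂) a

/-- The transition relation `e →a f` of the operational semantics. -/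
inductive STr {A : Type} : SExp A → A → SExp A → Prop
  | addL {e₁ e₂ f : SExp A} {a : A} : STr e₁ a f → STr (.add e₁ e₂) a f
  | addR {e₁ e₂ f : SExp A} {a : A} : STr e₂ a f → STr (.add e₁ e₂) a f
  | seqO {e₁ e₂ : SExp A} {a : A} : SOut e₁ a → STr (.seq e₁ e₂) a e₂
  | seqT {e₁ e₂ f : SExp A} {a : A} : STr e₁ a f → STr (.seq e₁ e₂) a (.seq f e₂)
  | starR {e₁ e₂ f : SExp A} {a : A} : STr e₂ a f → STr (.star e₁ e₂) a f
  | starL {e₁ e₂ f : SExp A} {a : A} : STr e₁ a f → STr (.star e₁ e₂) a (.seq f (.star e₁ e₂))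
  | starO {e₁ e₂ : SExp A} {a : A} : SOut e₁ a → STr (.star e₁ e₂) a (.star e₁ e₂)

/-- Provable equivalence: the smallest congruence containing Milner's 1-free
axioms (B1)-(B7), (BKS1), (BKS2) and closed under the rule (RSP). -/
inductive Eqv {A : Type} : SExp A → SExp A → Prop
  | refl (e : SExp A) : Eqv e e
  | symm {e f : SExp A} : Eqv e f → Eqv f e
  | trans {e f g : SExp A} : Eqv e f → Eqv f g → Eqv e g
  | addCongr {e₁ f₁ e₂ f₂ : SExp A} : Eqv e₁ f₁ → Eqv e₂ f₂ → Eqv (.add e₁ e₂) (.add f₁ f₂)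
  | seqCongr {e₁ f₁ e₂ f₂ : SExp A} : Eqv e₁ f₁ → Eqv e₂ f₂ → Eqv (.seq e₁ e₂) (.seq f₁ f₂)
  | starCongr {e₁ f₁ e₂ f₂ : SExp A} : Eqv e₁ f₁ → Eqv e₂ f₂ → Eqv (.star e₁ e₂) (.star f₁ f₂)
  | B1 (e₁ e₂ : SExp A) : Eqv (.add e₁ e₂) (.add e₂ e₁)
  | B2 (e₁ e₂ e₃ : SExp A) : Eqv (.add e₁ (.add e₂ e₃)) (.add (.add e₁ e₂) e₃)
  | B3 (e₁ : SExp A) : Eqv (.add e₁ e₁) e₁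
  | B4 (e₁ e₂ e₃ : SExp A) : Eqv (.seq (.add e₁ e₂) e₃) (.add (.seq e₁ e₃) (.seq e₂ e₃))
  | B5 (e₁ e₂ e₃ : SExp A) : Eqv (.seq e₁ (.seq e₂ e₃)) (.seq (.seq e₁ e₂) e₃)
  | B6 (e₁ : SExp A) : Eqv (.add e₁ .zero) e₁
  | B7 (e₁ : SExp A) : Eqv (.seq .zero e₁) .zero
  | BKS1 (e₁ e₂ : SExp A) : Eqv (.star e₁ e₂) (.add (.seq e₁ (.star e₁ e₂)) e₂)
  | BKS2 (e₁ e₂ e₃ : SExp A) : Eqv (.seq (.star e₁ e₂) e₃) (.star e₁ (.seq e₂ e₃))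
  | RSP {e₁ e₂ e₃ : SExp A} : Eqv e₃ (.add (.seq e₁ e₃) e₂) → Eqv e₃ (.star e₁ e₂)

/-- Generalized sum of a list of expressions (the empty sum is `0`). -/
def sumList {A : Type} (l : List (SExp A)) : SExp A := l.foldr SExp.add SExp.zero

/-- The setoid of 1-free star expressions modulo provable equivalence. -/
def eqvSetoid (A : Type) : Setoid (SExp A) :=
  ⟨Eqv, ⟨Eqv.refl, Eqv.symm, Eqv.trans⟩⟩

namespace StmtAux

variable {A : Type}

open SExp

lemma sout_sum {l : List (SExp A)} {a : A} :
    SOut (sumList l) a ↔ ∃ e ∈ l, SOut e a := by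
  induction l with
  | nil => simp [sumList]; intro h; cases h
  | cons e l ih =>
    constructor
    · intro h; cases h with
      | addL h => exact ⟨e, by simp, h⟩
      | addR h => obtain ⟨f, hf, h⟩ := ih.mp h; exact ⟨f, by simp [hf], h⟩
    · rintro ⟨f, hf, h⟩
      rcases List.mem_cons.mp hf with rfl | hf
      · exact SOut.addL h
      · exact SOut.addR (ih.mpr ⟨f, hf, h⟩)

lemma str_sum {l : List (SExp A)} {a : A} {g : SExp A} :
    STr (sumList l) a g ↔ ∃ e ∈ l, STr e a g := by
  induction l with
  | nil => simp [sumList]; intro h; cases h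
  | cons e l ih =>
    constructor
    · intro h; cases h with
      | addL h => exact ⟨e, by simp, h⟩
      | addR h => obtain ⟨f, hf, h⟩ := ih.mp h; exact ⟨f, by simp [hf], h⟩
    · rintro ⟨f, hf, h⟩
      rcases List.mem_cons.mp hf with rfl | hf
      · exact STr.addL h
      · exact STr.addR (ih.mpr ⟨f, hf, h⟩)

lemma eqv_zero_add (e : SExp A) : Eqv (.add .zero e) e :=
  (Eqv.B1 _ _).trans (Eqv.B6 e)

lemma eqv_swap (e f g : SExp A) :
    Eqv (.add e (.add f g)) (.add f (.add e g)) :=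
  (Eqv.B2 _ _ _).trans <| ((Eqv.addCongr (Eqv.B1 e f) (Eqv.refl g)).trans
    (Eqv.B2 _ _ _).symm)

lemma absorb {m : List (SExp A)} {e : SExp A} (h : ∃ f ∈ m, Eqv e f) :
    Eqv (.add e (sumList m)) (sumList m) := by
  induction m with
  | nil => simp at h
  | cons f m ih =>
    obtain ⟨f', hf', he⟩ := h
    rcases List.mem_cons.mp hf' with rfl | hf'
    · exact (Eqv.B2 _ _ _).trans
        (Eqv.addCongr ((Eqv.addCongr he (Eqv.refl _)).trans (Eqv.B3 _)) (Eqv.refl _))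
    · exact (eqv_swap _ _ _).trans (Eqv.addCongr (Eqv.refl f) (ih ⟨f', hf', he⟩))

lemma sub_sum {l m : List (SExp A)} (h : ∀ e ∈ l, ∃ f ∈ m, Eqv e f) :
    Eqv (.add (sumList l) (sumList m)) (sumList m) := by
  induction l with
  | nil => exact eqv_zero_add _
  | cons e l ih =>
    refine ((Eqv.B2 _ _ _).symm.trans ?_)
    refine (Eqv.addCongr (Eqv.refl e) (ih fun f hf => h f (by simp [hf]))).trans ?_
    exact absorb (h e (by simp))

lemma sum_eqv {l m : List (SExp A)} (h1 : ∀ e ∈ l, ∃ f ∈ m, Eqv e f)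
    (h2 : ∀ e ∈ m, ∃ f ∈ l, Eqv e f) :
    Eqv (sumList l) (sumList m) :=
  (sub_sum h2).symm.trans <| (Eqv.B1 _ _).trans (sub_sum h1)

lemma sum_append (l m : List (SExp A)) :
    Eqv (sumList (l ++ m)) (.add (sumList l) (sumList m)) := by
  induction l with
  | nil => exact (eqv_zero_add _).symm
  | cons e l ih =>
    exact (Eqv.addCongr (Eqv.refl e) ih).trans (Eqv.B2 _ _ _)

lemma sum_map_congr {α : Type*} {l : List α} {f g : α → SExp A}
    (h : ∀ x ∈ l, Eqv (f x) (g x)) :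
    Eqv (sumList (l.map f)) (sumList (l.map g)) := by
  induction l with
  | nil => exact Eqv.refl _
  | cons x l ih =>
    exact Eqv.addCongr (h x (by simp)) (ih fun y hy => h y (by simp [hy]))

lemma seq_sum (l : List (SExp A)) (g : SExp A) :
    Eqv (.seq (sumList l) g) (sumList (l.map (fun e => .seq e g))) := by
  induction l with
  | nil => exact Eqv.B7 g
  | cons e l ih =>
    exact (Eqv.B4 _ _ _).trans (Eqv.addCongr (Eqv.refl _) ih)

/-- The canonical expansion expression. -/
def expE (outs : List A) (trs : List (A × SExp A)) : SExp A :=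
  sumList (outs.map SExp.act ++ trs.map fun p => SExp.seq (SExp.act p.1) p.2)

lemma sout_expE {outs : List A} {trs : List (A × SExp A)} {a : A} :
    SOut (expE outs trs) a ↔ a ∈ outs := by
  rw [expE, sout_sum]
  constructor
  · rintro ⟨e, he, h⟩
    rcases List.mem_append.mp he with he | he
    · obtain ⟨b, hb, rfl⟩ := List.mem_map.mp he
      cases h; exact hb
    · obtain ⟨p, hp, rfl⟩ := List.mem_map.mp he
      cases h
  · intro ha
    exact ⟨.act a, List.mem_append.mpr (Or.inl (List.mem_map.mpr ⟨a, ha, rfl⟩)), .act a⟩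

lemma str_expE {outs : List A} {trs : List (A × SExp A)} {a : A} {g : SExp A} :
    STr (expE outs trs) a g ↔ (a, g) ∈ trs := by
  rw [expE, str_sum]
  constructor
  · rintro ⟨e, he, h⟩
    rcases List.mem_append.mp he with he | he
    · obtain ⟨b, hb, rfl⟩ := List.mem_map.mp he
      cases h
    · obtain ⟨p, hp, rfl⟩ := List.mem_map.mp he
      cases h with
      | seqO h => cases h; exact hp
      | seqT h => cases h
  · intro hg
    exact ⟨.seq (.act a) g, List.mem_append.mpr (Or.inr (List.mem_map.mpr ⟨(a, g), hg, rfl⟩)),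
      STr.seqO (SOut.act a)⟩

end StmtAux
namespace StmtAux

variable {A : Type}

lemma fundamental (e : SExp A) :
    ∃ (outs : List A) (trs : List (A × SExp A)),
      (∀ a, SOut e a ↔ a ∈ outs) ∧ (∀ a f, STr e a f ↔ (a, f) ∈ trs) ∧
      Eqv e (expE outs trs) := by
  induction e with
  | act a =>
    refine ⟨[a], [], ?_, ?_, ?_⟩
    · intro b; constructor
      · intro h; cases h; simp
      · intro h; simp at h; subst h; exact SOut.act _
    · intro b f; constructor
      · intro h; cases h
      · simp
    · exact (Eqv.B6 _).symm
  | zero =>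
    refine ⟨[], [], ?_, ?_, Eqv.refl _⟩
    · intro a; simp; intro h; cases h
    · intro a f; simp; intro h; cases h
  | add e₁ e₂ ih₁ ih₂ =>
    obtain ⟨o₁, t₁, ho₁, ht₁, he₁⟩ := ih₁
    obtain ⟨o₂, t₂, ho₂, ht₂, he₂⟩ := ih₂
    refine ⟨o₁ ++ o₂, t₁ ++ t₂, ?_, ?_, ?_⟩
    · intro a; constructor
      · intro h; cases h with
        | addL h => simp [(ho₁ a).mp h]
        | addR h => simp [(ho₂ a).mp h]
      · intro h; rcases List.mem_append.mp h with h | h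
        · exact SOut.addL ((ho₁ a).mpr h)
        · exact SOut.addR ((ho₂ a).mpr h)
    · intro a f; constructor
      · intro h; cases h with
        | addL h => simp [(ht₁ a f).mp h]
        | addR h => simp [(ht₂ a f).mp h]
      · intro h; rcases List.mem_append.mp h with h | h
        · exact STr.addL ((ht₁ a f).mpr h)
        · exact STr.addR ((ht₂ a f).mpr h)
    · refine (Eqv.addCongr he₁ he₂).trans ?_
      refine ((sum_append _ _).symm).trans ?_
      refine sum_eqv ?_ ?_ <;>
      · intro g hg
        refine ⟨g, ?_, Eqv.refl g⟩
        simp only [expE, List.map_append, List.mem_append] at hg ⊢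
        tauto
  | seq e₁ e₂ ih₁ _ =>
    obtain ⟨o₁, t₁, ho₁, ht₁, he₁⟩ := ih₁
    refine ⟨[], o₁.map (fun a => (a, e₂)) ++ t₁.map (fun p => (p.1, .seq p.2 e₂)),
      ?_, ?_, ?_⟩
    · intro a; simp; intro h; cases h
    · intro a f; constructor
      · intro h; cases h with
        | seqO h =>
          exact List.mem_append.mpr (Or.inl (List.mem_map.mpr ⟨a, (ho₁ a).mp h, rfl⟩))
        | @seqT _ _ f₁ _ h =>
          exact List.mem_append.mpr (Or.inr (List.mem_map.mpr ⟨(a, f₁), (ht₁ a f₁).mp h, rfl⟩))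
      · intro h; rcases List.mem_append.mp h with h | h
        · obtain ⟨b, hb, heq⟩ := List.mem_map.mp h
          obtain ⟨h1, h2⟩ : b = a ∧ f = e₂ :=
            ⟨congrArg Prod.fst heq, (congrArg Prod.snd heq).symm⟩
          subst h1; subst h2
          exact STr.seqO ((ho₁ _).mpr hb)
        · obtain ⟨p, hp, heq⟩ := List.mem_map.mp h
          obtain ⟨h1, h2⟩ : p.1 = a ∧ f = .seq p.2 e₂ := by
            constructor
            · exact (congrArg Prod.fst heq)
            · exact (congrArg Prod.snd heq).symm
          subst h1; subst h2
          exact STr.seqT ((ht₁ p.1 p.2).mpr (by simpa using hp))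
    · refine (Eqv.seqCongr he₁ (Eqv.refl e₂)).trans ?_
      refine (seq_sum _ _).trans ?_
      rw [expE, List.map_append, List.map_map, List.map_map]
      refine (sum_eqv ?_ ?_)
      · rintro g hg
        simp only [expE, List.map_nil, List.nil_append, List.map_append, List.mem_append,
          List.map_map, List.mem_map, Function.comp] at hg ⊢
        rcases hg with ⟨b, hb, rfl⟩ | ⟨p, hp, rfl⟩
        · exact ⟨.seq (.act b) e₂, Or.inl ⟨b, hb, rfl⟩, Eqv.refl _⟩
        · exact ⟨.seq (.act p.1) (.seq p.2 e₂), Or.inr ⟨p, hp, rfl⟩, (Eqv.B5 _ _ _).symm⟩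
      · rintro g hg
        simp only [expE, List.map_nil, List.nil_append, List.map_append, List.mem_append,
          List.map_map, List.mem_map, Function.comp] at hg ⊢
        rcases hg with ⟨b, hb, rfl⟩ | ⟨p, hp, rfl⟩
        · exact ⟨.seq (.act b) e₂, Or.inl ⟨b, hb, rfl⟩, Eqv.refl _⟩
        · exact ⟨.seq (.seq (.act p.1) p.2) e₂, Or.inr ⟨p, hp, rfl⟩, Eqv.B5 _ _ _⟩
  | star e₁ e₂ ih₁ ih₂ =>
    obtain ⟨o₁, t₁, ho₁, ht₁, he₁⟩ := ih₁
    obtain ⟨o₂, t₂, ho₂, ht₂, he₂⟩ := ih₂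
    refine ⟨o₂, t₂ ++ (t₁.map (fun p => (p.1, .seq p.2 (.star e₁ e₂)))
        ++ o₁.map (fun a => (a, SExp.star e₁ e₂))), ?_, ?_, ?_⟩
    · intro a; constructor
      · intro h; cases h with
        | star h => exact (ho₂ a).mp h
      · intro h; exact SOut.star ((ho₂ a).mpr h)
    · intro a f; constructor
      · intro h; cases h with
        | starR h => exact List.mem_append.mpr (Or.inl ((ht₂ a f).mp h))
        | @starL _ _ f₁ _ h =>
          exact List.mem_append.mpr (Or.inr (List.mem_append.mpr
            (Or.inl (List.mem_map.mpr ⟨(a, f₁), (ht₁ a f₁).mp h, rfl⟩))))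
        | starO h =>
          exact List.mem_append.mpr (Or.inr (List.mem_append.mpr
            (Or.inr (List.mem_map.mpr ⟨a, (ho₁ a).mp h, rfl⟩))))
      · intro h
        rcases List.mem_append.mp h with h | h
        · exact STr.starR ((ht₂ a f).mpr h)
        · rcases List.mem_append.mp h with h | h
          · obtain ⟨p, hp, heq⟩ := List.mem_map.mp h
            obtain ⟨h1, h2⟩ : p.1 = a ∧ f = .seq p.2 (.star e₁ e₂) := by
              exact ⟨congrArg Prod.fst heq, (congrArg Prod.snd heq).symm⟩
            subst h1; subst h2
            exact STr.starL ((ht₁ p.1 p.2).mpr (by simpa using hp))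
          · obtain ⟨b, hb, heq⟩ := List.mem_map.mp h
            obtain ⟨h1, h2⟩ : b = a ∧ f = SExp.star e₁ e₂ := by
              exact ⟨congrArg Prod.fst heq, (congrArg Prod.snd heq).symm⟩
            subst h1; subst h2
            exact STr.starO ((ho₁ b).mpr hb)
    · refine (Eqv.BKS1 e₁ e₂).trans ?_
      refine (Eqv.addCongr (Eqv.seqCongr he₁ (Eqv.refl _)) he₂).trans ?_
      refine (Eqv.addCongr ((seq_sum _ _)) (Eqv.refl _)).trans ?_
      refine ((sum_append _ _).symm).trans ?_
      refine sum_eqv ?_ ?_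
      · rintro g hg
        simp only [expE, List.map_append, List.mem_append, List.map_map, List.mem_map,
          Function.comp] at hg ⊢
        rcases hg with (⟨b,hb,rfl⟩ | ⟨p,hp,rfl⟩) | (⟨b,hb,rfl⟩ | ⟨p,hp,rfl⟩)
        · exact ⟨.seq (.act b) (.star e₁ e₂),
            Or.inr (Or.inr (Or.inr ⟨b, hb, rfl⟩)), Eqv.refl _⟩
        · exact ⟨.seq (.act p.1) (.seq p.2 (.star e₁ e₂)),
            Or.inr (Or.inr (Or.inl ⟨p, hp, rfl⟩)), (Eqv.B5 _ _ _).symm⟩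
        · exact ⟨.act b, Or.inl ⟨b, hb, rfl⟩, Eqv.refl _⟩
        · exact ⟨.seq (.act p.1) p.2, Or.inr (Or.inl ⟨p, hp, rfl⟩), Eqv.refl _⟩
      · rintro g hg
        simp only [expE, List.map_append, List.mem_append, List.map_map, List.mem_map,
          Function.comp] at hg ⊢
        rcases hg with ⟨b,hb,rfl⟩ | ⟨p,hp,rfl⟩ | ⟨p,hp,rfl⟩ | ⟨b,hb,rfl⟩
        · exact ⟨.act b, Or.inr (Or.inl ⟨b, hb, rfl⟩), Eqv.refl _⟩
        · exact ⟨.seq (.act p.1) p.2, Or.inr (Or.inr ⟨p, hp, rfl⟩), Eqv.refl _⟩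
        · exact ⟨.seq (.seq (.act p.1) p.2) (.star e₁ e₂),
            Or.inl (Or.inr ⟨p, hp, rfl⟩), Eqv.B5 _ _ _⟩
        · exact ⟨.seq (.act b) (.star e₁ e₂), Or.inl (Or.inl ⟨b, hb, rfl⟩), Eqv.refl _⟩

end StmtAux
open StmtAux

/-- For a finite prechart `d`, a map `s : X → SExp` is a solution to the linear
system of `d` iff the composite `[−]_≡ ∘ s : X → SExp/≡` is a coalgebra
homomorphism.  Here `c` is the prechart of star expressions (operational
semantics) and `q` the quotient prechart with `[−]_≡` a homomorphism. -/
theorem stmt5 {A : Type} {X : Type}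
    (c : Prechart A (SExp A))
    (hco : ∀ e a, c.out e a ↔ SOut e a)
    (hct : ∀ e a, c.tr e a = {f | STr e a f})
    (q : Prechart A (Quotient (eqvSetoid A)))
    (hq : Prechart.IsHom c q (Quotient.mk (eqvSetoid A)))
    [Finite X] (d : Prechart A X) (s : X → SExp A) :
    (∀ x : X, ∃ (outs : List A) (trs : List (A × X)),
       outs.Nodup ∧ trs.Nodup ∧
       (∀ a, d.out x a ↔ a ∈ outs) ∧
       (∀ a x', x' ∈ d.tr x a ↔ (a, x') ∈ trs) ∧
       Eqv (s x) (sumList (outs.map SExp.act ++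
         trs.map (fun p => SExp.seq (SExp.act p.1) (s p.2)))))
    ↔ Prechart.IsHom d q (fun x => Quotient.mk (eqvSetoid A) (s x)) := by
  have qout : ∀ e a, q.out (Quotient.mk (eqvSetoid A) e) a ↔ SOut e a := by
    intro e a; rw [← (hq.1 e a), hco]
  have qtr : ∀ e a, q.tr (Quotient.mk (eqvSetoid A) e) a
      = (Quotient.mk (eqvSetoid A)) '' {f | STr e a f} := by
    intro e a; rw [hq.2, hct]
  constructor
  · -- solution → homomorphism
    intro hsol
    constructor
    · intro x a
      show d.out x a ↔ q.out (Quotient.mk (eqvSetoid A) (s x)) a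
      obtain ⟨outs, trs, _, _, hout, htr, heqv⟩ := hsol x
      have heqv' : Eqv (s x) (expE outs (trs.map fun p => (p.1, s p.2))) := by
        simpa [expE, List.map_map, Function.comp_def] using heqv
      have hmk : Quotient.mk (eqvSetoid A) (s x)
          = Quotient.mk (eqvSetoid A) (expE outs (trs.map fun p => (p.1, s p.2))) :=
        Quotient.sound heqv'
      rw [hout, hmk, qout, sout_expE]
    · intro x a
      show q.tr (Quotient.mk (eqvSetoid A) (s x)) a
        = (fun x' => Quotient.mk (eqvSetoid A) (s x')) '' d.tr x a
      obtain ⟨outs, trs, _, _, hout, htr, heqv⟩ := hsol x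
      have heqv' : Eqv (s x) (expE outs (trs.map fun p => (p.1, s p.2))) := by
        simpa [expE, List.map_map, Function.comp_def] using heqv
      have hmk : Quotient.mk (eqvSetoid A) (s x)
          = Quotient.mk (eqvSetoid A) (expE outs (trs.map fun p => (p.1, s p.2))) :=
        Quotient.sound heqv'
      rw [hmk, qtr]
      ext ξ
      simp only [Set.mem_image, Set.mem_setOf_eq]
      constructor
      · rintro ⟨f, hf, rfl⟩
        rw [str_expE] at hf
        obtain ⟨p, hp, heq⟩ := List.mem_map.mp hf
        obtain ⟨h1, h2⟩ : p.1 = a ∧ f = s p.2 :=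
          ⟨congrArg Prod.fst heq, (congrArg Prod.snd heq).symm⟩
        subst h2; subst h1
        exact ⟨p.2, (htr p.1 p.2).mpr (by simpa using hp), rfl⟩
      · rintro ⟨x', hx', rfl⟩
        exact ⟨s x', str_expE.mpr (List.mem_map.mpr ⟨(a, x'), (htr a x').mp hx', rfl⟩), rfl⟩
  · -- homomorphism → solution
    intro hhom x
    have hhom1 : ∀ x a, d.out x a ↔ q.out (Quotient.mk (eqvSetoid A) (s x)) a := hhom.1
    have hhom2 : ∀ x a, q.tr (Quotient.mk (eqvSetoid A) (s x)) a
        = (fun x' => Quotient.mk (eqvSetoid A) (s x')) '' d.tr x a := hhom.2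
    haveI := Classical.decEq A
    obtain ⟨o, t, ho, ht, he⟩ := fundamental (s x)
    -- transitions of x in d, as a finite set
    set T : Set (A × X) := {p | p.2 ∈ d.tr x p.1} with hT
    have hTfin : T.Finite := by
      have hsub : T ⊆ {a | a ∈ t.map Prod.fst} ×ˢ (Set.univ : Set X) := by
        rintro ⟨a, x'⟩ hp
        have h1 : Quotient.mk (eqvSetoid A) (s x')
            ∈ q.tr (Quotient.mk (eqvSetoid A) (s x)) a := by
          rw [hhom2]; exact ⟨x', hp, rfl⟩
        rw [qtr] at h1
        obtain ⟨f, hf, -⟩ := h1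
        exact ⟨List.mem_map.mpr ⟨(a, f), (ht a f).mp hf, rfl⟩, trivial⟩
      exact Set.Finite.subset (((t.map Prod.fst).finite_toSet).prod Set.finite_univ) hsub
    refine ⟨o.dedup, hTfin.toFinset.toList, List.nodup_dedup o, Finset.nodup_toList _, ?_, ?_, ?_⟩
    · intro a
      rw [hhom1 x a, qout, ho, List.mem_dedup]
    · intro a x'
      rw [Finset.mem_toList, Set.Finite.mem_toFinset]
      exact Iff.rfl
    · refine he.trans ?_
      have : sumList (o.dedup.map SExp.act ++
          hTfin.toFinset.toList.map (fun p => SExp.seq (SExp.act p.1) (s p.2)))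
          = expE o.dedup (hTfin.toFinset.toList.map fun p => (p.1, s p.2)) := by
        simp only [expE, List.map_map]; rfl
      rw [this]
      rw [expE, expE]
      refine sum_eqv ?_ ?_
      · rintro e he'
        rcases List.mem_append.mp he' with h | h
        · obtain ⟨b, hb, rfl⟩ := List.mem_map.mp h
          exact ⟨.act b, List.mem_append.mpr (Or.inl
            (List.mem_map.mpr ⟨b, List.mem_dedup.mpr hb, rfl⟩)), Eqv.refl _⟩
        · obtain ⟨p, hp, rfl⟩ := List.mem_map.mp h
          have htrp : STr (s x) p.1 p.2 := (ht p.1 p.2).mpr (by simpa using hp)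
          have h1 : Quotient.mk (eqvSetoid A) p.2
              ∈ q.tr (Quotient.mk (eqvSetoid A) (s x)) p.1 := by
            rw [qtr]; exact ⟨p.2, htrp, rfl⟩
          rw [hhom2] at h1
          obtain ⟨x', hx', hxe⟩ := h1
          have heqv2 : Eqv p.2 (s x') := Quotient.exact hxe.symm
          refine ⟨.seq (.act p.1) (s x'), ?_, Eqv.seqCongr (Eqv.refl _) heqv2⟩
          refine List.mem_append.mpr (Or.inr (List.mem_map.mpr ⟨(p.1, s x'), ?_, rfl⟩))
          refine List.mem_map.mpr ⟨(p.1, x'), ?_, rfl⟩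
          rw [Finset.mem_toList, Set.Finite.mem_toFinset]
          exact hx'
      · rintro e he'
        rcases List.mem_append.mp he' with h | h
        · obtain ⟨b, hb, rfl⟩ := List.mem_map.mp h
          exact ⟨.act b, List.mem_append.mpr (Or.inl
            (List.mem_map.mpr ⟨b, List.mem_dedup.mp hb, rfl⟩)), Eqv.refl _⟩
        · obtain ⟨p', hp', rfl⟩ := List.mem_map.mp h
          obtain ⟨p, hp, rfl⟩ := List.mem_map.mp hp'
          have hpT : p.2 ∈ d.tr x p.1 := by
            rw [Finset.mem_toList, Set.Finite.mem_toFinset] at hp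
            exact hp
          have h1 : Quotient.mk (eqvSetoid A) (s p.2)
              ∈ q.tr (Quotient.mk (eqvSetoid A) (s x)) p.1 := by
            rw [hhom2]; exact ⟨p.2, hpT, rfl⟩
          rw [qtr] at h1
          obtain ⟨f, hf, hfe⟩ := h1
          have heqv2 : Eqv (s p.2) f := Quotient.exact hfe.symm
          refine ⟨.seq (.act p.1) f, ?_, Eqv.seqCongr (Eqv.refl _) heqv2⟩
          exact List.mem_append.mpr (Or.inr (List.mem_map.mpr ⟨(p.1, f), (ht p.1 f).mp hf, rfl⟩))
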